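/- Let π ∈ S_n avoid 132, and suppose σ, τ ∈ [e, π] (interval in the right weak order) with σ ≠ τ. If there exists β ∈ [e, π] with τ ⋗ β in the right weak order (β = τs_m) and β ⋖ σ in the strong Bruhat order (σ = βt_{ij}), then α = σs_m satisfies τ ⋖ α in the strong Bruhat order, α ⋗ σ in the right weak order, and α ∈ [e, π]. -/

import Mathlib

open Equiv

/-- The adjacent transposition `s i`, swapping positions `i` and `i+1` (0-indexed). -/
def simpleT {n : ℕ} (i : Fin n) : Equiv.Perm (Fin (n+1)) := Equiv.swap i.castSucc i.succ

/-- Coxeter length: minimal length of a word in adjacent transpositions. -/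
noncomputable def len {n : ℕ} (σ : Equiv.Perm (Fin (n+1))) : ℕ :=
  sInf {k | ∃ l : List (Fin n), l.length = k ∧ (l.map simpleT).prod = σ}

/-- Cover relation of the right weak Bruhat order. -/
def weakCov {n : ℕ} (σ τ : Equiv.Perm (Fin (n+1))) : Prop :=
  ∃ i : Fin n, τ = σ * simpleT i ∧ len τ = len σ + 1

/-- The right weak Bruhat order. -/
def weakLE {n : ℕ} : Equiv.Perm (Fin (n+1)) → Equiv.Perm (Fin (n+1)) → Prop :=
  Relation.ReflTransGen weakCov

/-- `σ` contains the pattern 132. -/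
def contains132 {m : ℕ} (σ : Equiv.Perm (Fin m)) : Prop :=
  ∃ i₁ i₂ i₃ : Fin m, i₁ < i₂ ∧ i₂ < i₃ ∧ σ i₁ < σ i₃ ∧ σ i₃ < σ i₂

open Finset

variable {n : ℕ}

theorem Equiv.Perm.inv_apply_self {α : Type*} (f : Perm α) (x : α) : f⁻¹ (f x) = x :=
  f.symm_apply_apply x

theorem Equiv.Perm.apply_inv_self {α : Type*} (f : Perm α) (x : α) : f (f⁻¹ x) = x :=
  f.apply_symm_apply x

/-- value-inversions of a permutation -/
def Invs (w : Perm (Fin (n+1))) : Finset (Fin (n+1) × Fin (n+1)) :=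
  univ.filter (fun p => p.1 < p.2 ∧ w⁻¹ p.2 < w⁻¹ p.1)

lemma mem_Invs {w : Perm (Fin (n+1))} {a b : Fin (n+1)} :
    (a, b) ∈ Invs w ↔ a < b ∧ w⁻¹ b < w⁻¹ a := by
  simp [Invs]

lemma mul_swap_inv_apply (w : Perm (Fin (n+1))) (i j x : Fin (n+1)) :
    (w * Equiv.swap i j)⁻¹ x = Equiv.swap i j (w⁻¹ x) := by
  simp [mul_inv_rev]

lemma swap_adj_lt_iff {N : ℕ} {p q u v : Fin N} (hpq : (q : ℕ) = (p : ℕ) + 1)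
    (h1 : ¬(u = p ∧ v = q)) (h2 : ¬(u = q ∧ v = p)) :
    Equiv.swap p q u < Equiv.swap p q v ↔ u < v := by
  simp only [Equiv.swap_apply_def]
  rw [not_and_or] at h1 h2
  split_ifs with a1 a2 a3 a4 a5 a6 <;>
    simp only [Fin.lt_def, Fin.ext_iff, ← Fin.val_ne_iff] at * <;> omega

lemma Invs_one : Invs (1 : Perm (Fin (n+1))) = ∅ := by
  ext ⟨a, b⟩
  simp only [mem_Invs, Finset.notMem_empty, iff_false]
  rintro ⟨h1, h2⟩
  simp only [inv_one, Perm.one_apply] at h2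
  exact absurd h1 (not_lt.2 h2.le)

lemma q_val {m : Fin n} : ((m.succ : Fin (n+1)) : ℕ) = ((m.castSucc : Fin (n+1)) : ℕ) + 1 := by
  simp

lemma pq_ne {m : Fin n} : (m.castSucc : Fin (n+1)) ≠ m.succ :=
  ne_of_lt m.castSucc_lt_succ

lemma Invs_ascent {w : Perm (Fin (n+1))} {m : Fin n}
    (h : w m.castSucc < w m.succ) :
    Invs (w * simpleT m) = insert (w m.castSucc, w m.succ) (Invs w) ∧
      (w m.castSucc, w m.succ) ∉ Invs w := by
  set p := m.castSucc with hp
  set q := m.succ with hq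
  have hpq : (q : ℕ) = (p : ℕ) + 1 := q_val
  constructor
  · ext ⟨a, b⟩
    simp only [mem_Invs, Finset.mem_insert, Prod.mk.injEq]
    rw [show w * simpleT m = w * Equiv.swap p q from rfl]
    by_cases h1 : w⁻¹ a = p ∧ w⁻¹ b = q
    · have ha : a = w p := by rw [← h1.1]; simp
      have hb : b = w q := by rw [← h1.2]; simp
      subst ha hb
      simp only [mul_swap_inv_apply]
      rw [Perm.inv_apply_self, Perm.inv_apply_self, Equiv.swap_apply_left,
        Equiv.swap_apply_right]
      have : p < q := by rw [Fin.lt_def]; omega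
      simp [h, this]
    · by_cases h2 : w⁻¹ a = q ∧ w⁻¹ b = p
      · have ha : a = w q := by rw [← h2.1]; simp
        have hb : b = w p := by rw [← h2.2]; simp
        subst ha hb
        have hab : ¬ (w q < w p) := not_lt.2 h.le
        have hne2 : ¬ (w q = w p ∧ w p = w q) := by
          rintro ⟨hh, -⟩; exact absurd hh (w.injective.ne (pq_ne.symm))
        simp only [mul_swap_inv_apply]
        constructor
        · rintro ⟨hlt, -⟩; exact absurd hlt hab
        · rintro (hh | ⟨hlt, -⟩)
          · exact absurd hh hne2
          · exact absurd hlt hab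
      · have key : Equiv.swap p q (w⁻¹ b) < Equiv.swap p q (w⁻¹ a) ↔ w⁻¹ b < w⁻¹ a := by
          refine swap_adj_lt_iff hpq ?_ ?_
          · rintro ⟨hb, ha⟩; exact h2 ⟨ha, hb⟩
          · rintro ⟨hb, ha⟩; exact h1 ⟨ha, hb⟩
        simp only [mul_swap_inv_apply, key]
        have : ¬ (a = w p ∧ b = w q) := by
          rintro ⟨rfl, rfl⟩; exact h1 (by simp)
        tauto
  · rw [mem_Invs]
    rintro ⟨-, hlt⟩
    rw [Perm.inv_apply_self, Perm.inv_apply_self] at hlt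
    exact absurd hlt (not_lt.2 (le_of_lt (by rw [Fin.lt_def]; omega)))

lemma simpleT_mul_self (m : Fin n) : simpleT m * simpleT m = 1 := by
  simp [simpleT]

lemma Invs_descent {w : Perm (Fin (n+1))} {m : Fin n}
    (h : w m.succ < w m.castSucc) :
    Invs (w * simpleT m) = (Invs w).erase (w m.succ, w m.castSucc) ∧
      (w m.succ, w m.castSucc) ∈ Invs w := by
  set w' := w * simpleT m with hw'
  have hw : w = w' * simpleT m := by
    rw [hw', mul_assoc, simpleT_mul_self, mul_one]
  have hp : w' m.castSucc = w m.succ := by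
    rw [hw']; simp [simpleT, Perm.mul_apply]
  have hq : w' m.succ = w m.castSucc := by
    rw [hw']; simp [simpleT, Perm.mul_apply]
  have hasc : w' m.castSucc < w' m.succ := by rw [hp, hq]; exact h
  obtain ⟨he, hnm⟩ := Invs_ascent hasc
  rw [← hw] at he
  rw [hp, hq] at he hnm
  constructor
  · rw [he, Finset.erase_insert hnm]
  · rw [he]; exact Finset.mem_insert_self _ _

lemma eq_one_of_no_descent {σ : Perm (Fin (n+1))}
    (h : ∀ m : Fin n, σ m.castSucc < σ m.succ) : σ = 1 := by
  have hsm : StrictMono σ := Fin.strictMono_iff_lt_succ.2 h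
  have hwf : WellFoundedLT (Fin (n+1)) := inferInstance
  have hle : ∀ i : Fin (n+1), i ≤ σ i := fun i => StrictMono.le_apply (β := Fin (n+1)) hsm
  ext i
  simp only [Perm.one_apply]
  by_contra hne
  have hlt : (i : ℕ) < (σ i : ℕ) := by
    have := Fin.le_def.mp (hle i)
    omega
  have hsum : ∑ i : Fin (n+1), ((σ i : ℕ)) = ∑ i : Fin (n+1), (i : ℕ) :=
    Equiv.sum_comp σ (fun i => (i : ℕ))
  have : ∑ i : Fin (n+1), (i : ℕ) < ∑ i : Fin (n+1), ((σ i : ℕ)) := by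
    refine Finset.sum_lt_sum (fun j _ => ?_) ⟨i, Finset.mem_univ i, ?_⟩
    · exact Fin.le_def.mp (hle j)
    · exact hlt
  omega

lemma exists_descent {σ : Perm (Fin (n+1))} (h : σ ≠ 1) :
    ∃ m : Fin n, σ m.succ < σ m.castSucc := by
  by_contra hc
  push_neg at hc
  refine h (eq_one_of_no_descent (fun m => ?_))
  rcases lt_or_eq_of_le (hc m) with h' | h'
  · exact h'
  · exact absurd (σ.injective h') pq_ne

lemma exists_word (σ : Perm (Fin (n+1))) :
    ∃ l : List (Fin n), l.length = (Invs σ).card ∧ (l.map simpleT).prod = σ := by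
  generalize hk : (Invs σ).card = k
  induction k generalizing σ with
  | zero =>
    refine ⟨[], rfl, ?_⟩
    by_contra hne
    obtain ⟨m, hm⟩ := exists_descent (by simpa using (Ne.symm hne))
    have := (Invs_descent hm).2
    have hcard := Finset.card_pos.2 ⟨_, this⟩
    omega
  | succ k ih =>
    have hne : σ ≠ 1 := by
      rintro rfl
      rw [Invs_one] at hk; simp at hk
    obtain ⟨m, hm⟩ := exists_descent hne
    obtain ⟨he, hmem⟩ := Invs_descent hm
    have hcard : (Invs (σ * simpleT m)).card = k := by
      rw [he, Finset.card_erase_of_mem hmem, hk]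
      omega
    obtain ⟨l, hl, hp⟩ := ih _ hcard
    refine ⟨l ++ [m], by simp [hl], ?_⟩
    rw [List.map_append, List.prod_append, hp]
    simp [mul_assoc, simpleT_mul_self]

lemma card_le_of_word (σ : Perm (Fin (n+1))) (l : List (Fin n))
    (hp : (l.map simpleT).prod = σ) : (Invs σ).card ≤ l.length := by
  induction l using List.reverseRecOn generalizing σ with
  | nil =>
    simp at hp
    rw [← hp, Invs_one]; simp
  | append_singleton l m ih =>
    rw [List.map_append, List.prod_append] at hp
    simp only [List.map_cons, List.map_nil, List.prod_cons, List.prod_nil, mul_one] at hp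
    set w := (l.map simpleT).prod with hw
    have hσ : σ = w * simpleT m := hp.symm
    have hwl := ih w rfl
    rcases lt_trichotomy (w m.castSucc) (w m.succ) with h | h | h
    · have := (Invs_ascent h).1
      rw [← hσ] at this
      have hc : (Invs σ).card ≤ (Invs w).card + 1 := by
        rw [this]; exact (Finset.card_insert_le _ _).trans (by omega)
      simpa using hc.trans (by simpa using Nat.add_le_add_right hwl 1)
    · exact absurd (w.injective h) pq_ne
    · have := (Invs_descent h).1
      rw [← hσ] at this
      have hc : (Invs σ).card ≤ (Invs w).card := by
        rw [this]; exact Finset.card_erase_le.trans le_rfl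
      simp only [List.length_append, List.length_cons, List.length_nil]
      omega

lemma len_eq_card (σ : Perm (Fin (n+1))) : len σ = (Invs σ).card := by
  obtain ⟨l, hl, hp⟩ := exists_word σ
  refine le_antisymm (Nat.sInf_le ⟨l, hl, hp⟩) (le_csInf ⟨_, l, hl, hp⟩ ?_)
  rintro k ⟨l', hl', hp'⟩
  rw [← hl']
  exact card_le_of_word σ l' hp'

lemma inv_val_eq_card (σ : Perm (Fin (n+1))) (b : Fin (n+1)) :
    ((σ⁻¹ b : Fin (n+1)) : ℕ) = (univ.filter (fun a => σ⁻¹ a < σ⁻¹ b)).card := by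
  have himg : univ.filter (fun a => σ⁻¹ a < σ⁻¹ b) = (Finset.Iio (σ⁻¹ b)).image σ := by
    ext a
    simp only [Finset.mem_filter, Finset.mem_univ, true_and, Finset.mem_image,
      Finset.mem_Iio]
    constructor
    · intro h; exact ⟨σ⁻¹ a, h, by simp⟩
    · rintro ⟨x, hx, rfl⟩; simpa using hx
  rw [himg, Finset.card_image_of_injective _ σ.injective]
  simp

lemma Invs_injective {σ π : Perm (Fin (n+1))} (h : Invs σ = Invs π) : σ = π := by
  have hinv : σ⁻¹ = π⁻¹ := by
    ext b
    have hfil : (univ.filter (fun a => σ⁻¹ a < σ⁻¹ b)) =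
        (univ.filter (fun a => π⁻¹ a < π⁻¹ b)) := by
      apply Finset.filter_congr
      intro a _
      rcases lt_trichotomy a b with hab | rfl | hab
      · have : ((a, b) ∈ Invs σ) ↔ ((a, b) ∈ Invs π) := by rw [h]
        rw [mem_Invs, mem_Invs] at this
        simp only [hab, true_and] at this
        have hne1 : σ⁻¹ a ≠ σ⁻¹ b := fun hh => (ne_of_lt hab) (σ⁻¹.injective hh)
        have hne2 : π⁻¹ a ≠ π⁻¹ b := fun hh => (ne_of_lt hab) (π⁻¹.injective hh)
        constructor
        · intro hlt
          rcases lt_or_gt_of_ne hne2 with h' | h'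
          · exact h'
          · exact absurd (this.2 h') (not_lt.2 hlt.le)
        · intro hlt
          rcases lt_or_gt_of_ne hne1 with h' | h'
          · exact h'
          · exact absurd (this.1 h') (not_lt.2 hlt.le)
      · simp
      · have : ((b, a) ∈ Invs σ) ↔ ((b, a) ∈ Invs π) := by rw [h]
        rw [mem_Invs, mem_Invs] at this
        simp only [hab, true_and] at this
        exact this
    have := inv_val_eq_card σ b
    rw [hfil, ← inv_val_eq_card π b] at this
    exact this
  have := congrArg (·⁻¹) hinv
  simpa using this

lemma weakLE_subset {σ π : Perm (Fin (n+1))} (h : weakLE σ π) : Invs σ ⊆ Invs π := by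
  induction h with
  | refl => exact subset_rfl
  | @tail b c hab hbc ih =>
    obtain ⟨m, rfl, hlen⟩ := hbc
    rcases lt_trichotomy (b m.castSucc) (b m.succ) with h' | h' | h'
    · have := (Invs_ascent h').1
      rw [this]
      exact ih.trans (Finset.subset_insert _ _)
    · exact absurd (b.injective h') pq_ne
    · exfalso
      obtain ⟨he, hmem⟩ := Invs_descent h'
      rw [len_eq_card, len_eq_card, he, Finset.card_erase_of_mem hmem] at hlen
      have := Finset.card_pos.2 ⟨_, hmem⟩
      omega

lemma subset_weakLE_aux : ∀ (k : ℕ) (σ π : Perm (Fin (n+1))),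
    (Invs π \ Invs σ).card = k → Invs σ ⊆ Invs π → weakLE σ π := by
  intro k
  induction k using Nat.strong_induction_on with
  | _ k ih =>
    intro σ π hk hsub
    rcases Nat.eq_zero_or_pos k with rfl | hpos
    · have hsup : Invs π ⊆ Invs σ := by
        intro x hx
        by_contra hxs
        have hx2 : x ∈ Invs π \ Invs σ := Finset.mem_sdiff.2 ⟨hx, hxs⟩
        rw [Finset.card_eq_zero] at hk
        rw [hk] at hx2
        exact absurd hx2 (Finset.notMem_empty x)
      rw [Invs_injective (Finset.Subset.antisymm hsub hsup)]
      exact Relation.ReflTransGen.refl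
    · have hne : (Invs π \ Invs σ).Nonempty := Finset.card_pos.1 (by omega)
      obtain ⟨⟨a, b⟩, hmem, hmin⟩ := Finset.exists_min_image _
        (fun p => ((σ⁻¹ p.2 : Fin (n+1)) : ℕ) - ((σ⁻¹ p.1 : Fin (n+1)) : ℕ)) hne
      rw [Finset.mem_sdiff] at hmem
      obtain ⟨hπm, hσm⟩ := hmem
      have hπm' := hπm
      rw [mem_Invs] at hπm'
      obtain ⟨hab, hπab⟩ := hπm'
      have hσab : σ⁻¹ a < σ⁻¹ b := by
        have hne' : σ⁻¹ a ≠ σ⁻¹ b := fun hh => (ne_of_lt hab) (σ⁻¹.injective hh)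
        rcases lt_or_gt_of_ne hne' with h' | h'
        · exact h'
        · exact absurd (mem_Invs.2 ⟨hab, h'⟩) hσm
      -- gap is exactly 1
      have hgap : ((σ⁻¹ b : Fin (n+1)) : ℕ) = ((σ⁻¹ a : Fin (n+1)) : ℕ) + 1 := by
        by_contra hg
        have hσab' := Fin.lt_def.mp hσab
        have h2 : ((σ⁻¹ a : Fin (n+1)) : ℕ) + 1 < ((σ⁻¹ b : Fin (n+1)) : ℕ) := by omega
        set kf : Fin (n+1) := ⟨((σ⁻¹ a : Fin (n+1)) : ℕ) + 1, by
          have := (σ⁻¹ b).isLt; omega⟩ with hkf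
        set v := σ kf with hv
        have hσv : σ⁻¹ v = kf := by rw [hv, Perm.inv_apply_self]
        have hkfa : σ⁻¹ a < σ⁻¹ v := by rw [hσv, Fin.lt_def, hkf]; simp
        have hkfb : σ⁻¹ v < σ⁻¹ b := by rw [hσv, Fin.lt_def, hkf]; simpa using h2
        have hva : v ≠ a := fun hh => (ne_of_lt hkfa) (by rw [hh])
        have hvb : v ≠ b := fun hh => (ne_of_lt hkfb) (by rw [hh])
        -- helper to contradict minimality
        have contra : ∀ u w : Fin (n+1), (u, w) ∈ Invs π \ Invs σ →
            ((σ⁻¹ w : Fin (n+1)) : ℕ) - ((σ⁻¹ u : Fin (n+1)) : ℕ) <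
            ((σ⁻¹ b : Fin (n+1)) : ℕ) - ((σ⁻¹ a : Fin (n+1)) : ℕ) → False := by
          intro u w hm hl
          have := hmin (u, w) hm
          simp only at this
          omega
        rcases lt_trichotomy v a with hcase | hcase | hcase
        · -- v < a : use pair (v, b)
          have hva' : (v, a) ∈ Invs σ := mem_Invs.2 ⟨hcase, hkfa⟩
          have hπva := (mem_Invs.1 (hsub hva')).2
          refine contra v b ?_ ?_
          · rw [Finset.mem_sdiff]
            refine ⟨mem_Invs.2 ⟨hcase.trans hab, hπab.trans hπva⟩, ?_⟩
            rw [mem_Invs]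
            rintro ⟨-, hh⟩
            exact absurd hkfb (not_lt.2 hh.le)
          · have := Fin.lt_def.mp hkfb
            rw [hσv, hkf]
            simp [-Perm.coe_inv]; omega
        · exact hva hcase
        · rcases lt_trichotomy v b with hcase2 | hcase2 | hcase2
          · -- a < v < b
            by_cases hπav : π⁻¹ v < π⁻¹ a
            · refine contra a v ?_ ?_
              · rw [Finset.mem_sdiff]
                refine ⟨mem_Invs.2 ⟨hcase, hπav⟩, ?_⟩
                rw [mem_Invs]
                rintro ⟨-, hh⟩
                exact absurd hkfa (not_lt.2 hh.le)
              · rw [hσv, hkf]; simp [-Perm.coe_inv]; omega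
            · have hπav' : π⁻¹ a < π⁻¹ v := by
                have : π⁻¹ a ≠ π⁻¹ v := fun hh => (ne_of_lt hcase) (π⁻¹.injective hh)
                rcases lt_or_gt_of_ne this with h' | h'
                · exact h'
                · exact absurd h' hπav
              refine contra v b ?_ ?_
              · rw [Finset.mem_sdiff]
                refine ⟨mem_Invs.2 ⟨hcase2, hπab.trans hπav'⟩, ?_⟩
                rw [mem_Invs]
                rintro ⟨-, hh⟩
                exact absurd hkfb (not_lt.2 hh.le)
              · rw [hσv, hkf]; simp [-Perm.coe_inv]; omega
          · exact hvb hcase2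
          · -- b < v : use pair (a, v)
            have hbv : (b, v) ∈ Invs σ := mem_Invs.2 ⟨hcase2, hkfb⟩
            have hπbv := (mem_Invs.1 (hsub hbv)).2
            refine contra a v ?_ ?_
            · rw [Finset.mem_sdiff]
              refine ⟨mem_Invs.2 ⟨hab.trans hcase2, hπbv.trans hπab⟩, ?_⟩
              rw [mem_Invs]
              rintro ⟨-, hh⟩
              exact absurd hkfa (not_lt.2 hh.le)
            · rw [hσv, hkf]; simp [-Perm.coe_inv]; omega
      -- now build the cover step
      have hn : ((σ⁻¹ a : Fin (n+1)) : ℕ) < n := by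
        have := (σ⁻¹ b).isLt; omega
      set m : Fin n := ⟨((σ⁻¹ a : Fin (n+1)) : ℕ), hn⟩ with hm
      have hpc : (m.castSucc : Fin (n+1)) = σ⁻¹ a := by
        apply Fin.ext; simp [hm]
      have hsc : (m.succ : Fin (n+1)) = σ⁻¹ b := by
        apply Fin.ext; simp [-Perm.coe_inv, hm, hgap]
      have hσp : σ m.castSucc = a := by rw [hpc, Perm.apply_inv_self]
      have hσq : σ m.succ = b := by rw [hsc, Perm.apply_inv_self]
      have hasc : σ m.castSucc < σ m.succ := by rw [hσp, hσq]; exact hab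
      obtain ⟨he, hnm⟩ := Invs_ascent hasc
      rw [hσp, hσq] at he hnm
      have hcov : weakCov σ (σ * simpleT m) := by
        refine ⟨m, rfl, ?_⟩
        rw [len_eq_card, len_eq_card, he, Finset.card_insert_of_notMem hnm]
      have hsub' : Invs (σ * simpleT m) ⊆ Invs π := by
        rw [he]
        exact Finset.insert_subset hπm hsub
      have hcard' : (Invs π \ Invs (σ * simpleT m)).card = k - 1 := by
        rw [he, Finset.sdiff_insert, Finset.card_erase_of_mem
          (Finset.mem_sdiff.2 ⟨hπm, hσm⟩), hk]
      exact Relation.ReflTransGen.head hcov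
        (ih (k - 1) (by omega) _ _ hcard' hsub')

lemma subset_weakLE {σ π : Perm (Fin (n+1))} (h : Invs σ ⊆ Invs π) : weakLE σ π :=
  subset_weakLE_aux _ σ π rfl h

lemma card_swap_ge {w : Perm (Fin (n+1))} {i j : Fin (n+1)} (hij : i < j)
    (hw : w i < w j) :
    ((Invs w).card + 1 ≤ (Invs (w * Equiv.swap i j)).card) ∧
    (∀ k : Fin (n+1), i < k → k < j → w i < w k → w k < w j →
      (Invs w).card + 3 ≤ (Invs (w * Equiv.swap i j)).card) := by
  set σ := w * Equiv.swap i j with hσdef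
  set c := w i with hc
  set d := w j with hd
  have hcd : c < d := hw
  have hσc : σ⁻¹ c = j := by
    rw [hσdef, mul_swap_inv_apply, hc, Perm.inv_apply_self, Equiv.swap_apply_left]
  have hσd : σ⁻¹ d = i := by
    rw [hσdef, mul_swap_inv_apply, hd, Perm.inv_apply_self, Equiv.swap_apply_right]
  have hσo : ∀ x, x ≠ c → x ≠ d → σ⁻¹ x = w⁻¹ x := by
    intro x h1 h2
    rw [hσdef, mul_swap_inv_apply]
    apply Equiv.swap_apply_of_ne_of_ne
    · intro hh; exact h1 (by rw [hc, ← hh, Perm.apply_inv_self])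
    · intro hh; exact h2 (by rw [hd, ← hh, Perm.apply_inv_self])
  have hwc : w⁻¹ c = i := by rw [hc, Perm.inv_apply_self]
  have hwd : w⁻¹ d = j := by rw [hd, Perm.inv_apply_self]
  set φ : (Fin (n+1) × Fin (n+1)) → (Fin (n+1) × Fin (n+1)) :=
    fun x => if x ∈ Invs σ then x else if x.2 = c then (x.1, d) else (c, x.2) with hφ
  have hφapp : ∀ u v : Fin (n+1),
      φ (u, v) = if (u, v) ∈ Invs σ then (u, v) else if v = c then (u, d) else (c, v) :=
    fun u v => rfl
  have fact2 : ∀ u, (u, c) ∈ Invs w → (u, c) ∉ Invs σ →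
      u < c ∧ i < w⁻¹ u ∧ w⁻¹ u < j ∧ (u, d) ∈ Invs σ := by
    intro u hm hn
    rw [mem_Invs] at hm
    obtain ⟨huc, hui⟩ := hm
    rw [hwc] at hui
    have hune : u ≠ c := ne_of_lt huc
    have hund : u ≠ d := ne_of_lt (huc.trans hcd)
    have hσu : σ⁻¹ u = w⁻¹ u := hσo u hune hund
    have hlt : w⁻¹ u < j := by
      rw [mem_Invs] at hn
      push_neg at hn
      have hle := hn huc
      rw [hσc, hσu] at hle
      rcases lt_or_eq_of_le hle with h' | h'
      · exact h'
      · exact absurd (by rw [hd, ← h']; exact (Perm.apply_inv_self w u).symm : u = d) hund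
    exact ⟨huc, hui, hlt, mem_Invs.2 ⟨huc.trans hcd, by rw [hσd, hσu]; exact hui⟩⟩
  have fact3 : ∀ v, (d, v) ∈ Invs w → (d, v) ∉ Invs σ →
      d < v ∧ i < w⁻¹ v ∧ w⁻¹ v < j ∧ (c, v) ∈ Invs σ := by
    intro v hm hn
    rw [mem_Invs] at hm
    obtain ⟨hdv, hvj⟩ := hm
    rw [hwd] at hvj
    have hvnc : v ≠ c := (ne_of_lt (hcd.trans hdv)).symm
    have hvnd : v ≠ d := (ne_of_lt hdv).symm
    have hσv : σ⁻¹ v = w⁻¹ v := hσo v hvnc hvnd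
    have hgt : i < w⁻¹ v := by
      rw [mem_Invs] at hn
      push_neg at hn
      have hle := hn hdv
      rw [hσd, hσv] at hle
      rcases lt_or_eq_of_le hle with h' | h'
      · exact h'
      · exact absurd (by rw [hc, h']; exact (Perm.apply_inv_self w v).symm : v = c) hvnc
    exact ⟨hdv, hgt, hvj, mem_Invs.2 ⟨hcd.trans hdv, by rw [hσc, hσv]; exact hvj⟩⟩
  have fact1 : ∀ u v, (u, v) ∈ Invs w → (u, v) ∉ Invs σ → v = c ∨ u = d := by
    intro u v hm hn
    by_contra hcon
    push_neg at hcon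
    obtain ⟨hvnc, hund⟩ := hcon
    rw [mem_Invs] at hm
    obtain ⟨huv, hvu⟩ := hm
    apply hn
    rcases eq_or_ne u c with rfl | hunc
    · rcases eq_or_ne v d with rfl | hvnd
      · rw [hwd, hwc] at hvu
        exact absurd hij (not_lt.2 hvu.le)
      · have hσv : σ⁻¹ v = w⁻¹ v := hσo v hvnc hvnd
        rw [mem_Invs, hσc, hσv]
        rw [hwc] at hvu
        exact ⟨huv, hvu.trans hij⟩
    · rcases eq_or_ne v d with rfl | hvnd
      · have hσu : σ⁻¹ u = w⁻¹ u := hσo u hunc hund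
        rw [mem_Invs, hσd, hσu]
        rw [hwd] at hvu
        exact ⟨huv, hij.trans hvu⟩
      · rw [mem_Invs, hσo v hvnc hvnd, hσo u hunc hund]
        exact ⟨huv, hvu⟩
  have mapsto : ∀ x ∈ Invs w, φ x ∈ Invs σ := by
    rintro ⟨u, v⟩ hx
    rw [hφapp u v]
    by_cases hxσ : (u, v) ∈ Invs σ
    · rw [if_pos hxσ]; exact hxσ
    · rw [if_neg hxσ]
      rcases fact1 u v hx hxσ with rfl | rfl
      · rw [if_pos rfl]; exact (fact2 u hx hxσ).2.2.2
      · have hvnc : v ≠ c := (ne_of_lt (hcd.trans (mem_Invs.1 hx).1)).symm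
        rw [if_neg hvnc]; exact (fact3 v hx hxσ).2.2.2
  have hinj : Set.InjOn φ ↑(Invs w) := by
    rintro ⟨u1, v1⟩ hx ⟨u2, v2⟩ hy heq
    simp only [Finset.mem_coe] at hx hy
    rw [hφapp u1 v1, hφapp u2 v2] at heq
    by_cases h1 : (u1, v1) ∈ Invs σ <;> by_cases h2 : (u2, v2) ∈ Invs σ
    · rw [if_pos h1, if_pos h2] at heq; exact heq
    · rw [if_pos h1, if_neg h2] at heq
      exfalso
      rcases fact1 u2 v2 hy h2 with rfl | rfl
      · rw [if_pos rfl] at heq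
        obtain ⟨-, -, hlt, -⟩ := fact2 u2 hy h2
        rw [Prod.mk.injEq] at heq
        obtain ⟨rfl, rfl⟩ := heq
        have := (mem_Invs.1 hx).2
        rw [hwd] at this
        exact absurd hlt (not_lt.2 this.le)
      · have hvnc : v2 ≠ c := (ne_of_lt (hcd.trans (mem_Invs.1 hy).1)).symm
        rw [if_neg hvnc] at heq
        obtain ⟨-, hgt, -, -⟩ := fact3 v2 hy h2
        rw [Prod.mk.injEq] at heq
        obtain ⟨rfl, rfl⟩ := heq
        have := (mem_Invs.1 hx).2
        rw [hwc] at this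
        exact absurd hgt (not_lt.2 this.le)
    · rw [if_neg h1, if_pos h2] at heq
      exfalso
      rcases fact1 u1 v1 hx h1 with rfl | rfl
      · rw [if_pos rfl] at heq
        obtain ⟨-, -, hlt, -⟩ := fact2 u1 hx h1
        rw [Prod.mk.injEq] at heq
        obtain ⟨rfl, hh⟩ := heq
        rw [← hh] at hy
        have := (mem_Invs.1 hy).2
        rw [hwd] at this
        exact absurd hlt (not_lt.2 this.le)
      · have hvnc : v1 ≠ c := (ne_of_lt (hcd.trans (mem_Invs.1 hx).1)).symm
        rw [if_neg hvnc] at heq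
        obtain ⟨-, hgt, -, -⟩ := fact3 v1 hx h1
        rw [Prod.mk.injEq] at heq
        obtain ⟨hh1, hh2⟩ := heq
        rw [← hh1, ← hh2] at hy
        have := (mem_Invs.1 hy).2
        rw [hwc] at this
        exact absurd hgt (not_lt.2 this.le)
    · rw [if_neg h1, if_neg h2] at heq
      rcases fact1 u1 v1 hx h1 with rfl | rfl <;> rcases fact1 u2 v2 hy h2 with rfl | rfl
      · rw [if_pos rfl, if_pos rfl] at heq
        rw [Prod.mk.injEq] at heq
        obtain ⟨rfl, -⟩ := heq
        rfl
      · have hvnc : v2 ≠ c := (ne_of_lt (hcd.trans (mem_Invs.1 hy).1)).symm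
        rw [if_pos rfl, if_neg hvnc] at heq
        rw [Prod.mk.injEq] at heq
        obtain ⟨rfl, -⟩ := heq
        exact absurd (fact2 c hx h1).1 (lt_irrefl c)
      · have hvnc : v1 ≠ c := (ne_of_lt (hcd.trans (mem_Invs.1 hx).1)).symm
        rw [if_neg hvnc, if_pos rfl] at heq
        rw [Prod.mk.injEq] at heq
        obtain ⟨hh, -⟩ := heq
        rw [← hh] at hy
        exact absurd (mem_Invs.1 hy).1 (lt_irrefl c)
      · have hv1 : v1 ≠ c := (ne_of_lt (hcd.trans (mem_Invs.1 hx).1)).symm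
        have hv2 : v2 ≠ c := (ne_of_lt (hcd.trans (mem_Invs.1 hy).1)).symm
        rw [if_neg hv1, if_neg hv2] at heq
        rw [Prod.mk.injEq] at heq
        obtain ⟨-, rfl⟩ := heq
        rfl
  have hcdσ : (c, d) ∈ Invs σ := mem_Invs.2 ⟨hcd, by rw [hσc, hσd]; exact hij⟩
  have hcdnimg : ∀ x ∈ Invs w, φ x ≠ (c, d) := by
    rintro ⟨u, v⟩ hx
    rw [hφapp u v]
    by_cases hxσ : (u, v) ∈ Invs σ
    · rw [if_pos hxσ]
      intro heq
      rw [Prod.mk.injEq] at heq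
      obtain ⟨rfl, rfl⟩ := heq
      have := (mem_Invs.1 hx).2
      rw [hwc, hwd] at this
      exact absurd hij (not_lt.2 this.le)
    · rw [if_neg hxσ]
      rcases fact1 u v hx hxσ with rfl | rfl
      · rw [if_pos rfl]
        intro heq
        rw [Prod.mk.injEq] at heq
        obtain ⟨rfl, -⟩ := heq
        exact absurd (fact2 c hx hxσ).1 (lt_irrefl c)
      · have hvnc : v ≠ c := (ne_of_lt (hcd.trans (mem_Invs.1 hx).1)).symm
        rw [if_neg hvnc]
        intro heq
        rw [Prod.mk.injEq] at heq
        obtain ⟨-, rfl⟩ := heq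
        exact absurd (fact3 d hx hxσ).1 (lt_irrefl d)
  constructor
  · have h1 : (Invs w).card ≤ ((Invs σ).erase (c, d)).card := by
      apply Finset.card_le_card_of_injOn φ
      · intro x hx
        exact Finset.mem_erase.2 ⟨hcdnimg x hx, mapsto x hx⟩
      · exact hinj
    rw [Finset.card_erase_of_mem hcdσ] at h1
    have := Finset.card_pos.2 ⟨_, hcdσ⟩
    omega
  · intro k hik hkj hck hkd
    set v0 := w k with hv0
    have hv0nc : v0 ≠ c := (ne_of_lt hck).symm
    have hv0nd : v0 ≠ d := ne_of_lt hkd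
    have hwv0 : w⁻¹ v0 = k := by rw [hv0, Perm.inv_apply_self]
    have hσv0 : σ⁻¹ v0 = k := by rw [hσo v0 hv0nc hv0nd, hwv0]
    have hcv0σ : (c, v0) ∈ Invs σ := mem_Invs.2 ⟨hck, by rw [hσc, hσv0]; exact hkj⟩
    have hv0dσ : (v0, d) ∈ Invs σ := mem_Invs.2 ⟨hkd, by rw [hσd, hσv0]; exact hik⟩
    have hcv0nimg : ∀ x ∈ Invs w, φ x ≠ (c, v0) := by
      rintro ⟨u, v⟩ hx
      rw [hφapp u v]
      by_cases hxσ : (u, v) ∈ Invs σ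
      · rw [if_pos hxσ]
        intro heq
        rw [Prod.mk.injEq] at heq
        obtain ⟨rfl, rfl⟩ := heq
        have := (mem_Invs.1 hx).2
        rw [hwc, hwv0] at this
        exact absurd hik (not_lt.2 this.le)
      · rw [if_neg hxσ]
        rcases fact1 u v hx hxσ with rfl | rfl
        · rw [if_pos rfl]
          intro heq
          rw [Prod.mk.injEq] at heq
          obtain ⟨-, hh⟩ := heq
          exact absurd (hh ▸ hkd) (lt_irrefl d)
        · have hvnc : v ≠ c := (ne_of_lt (hcd.trans (mem_Invs.1 hx).1)).symm
          rw [if_neg hvnc]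
          intro heq
          rw [Prod.mk.injEq] at heq
          obtain ⟨-, rfl⟩ := heq
          exact absurd ((fact3 v0 hx hxσ).1.trans hkd) (lt_irrefl d)
    have hv0dnimg : ∀ x ∈ Invs w, φ x ≠ (v0, d) := by
      rintro ⟨u, v⟩ hx
      rw [hφapp u v]
      by_cases hxσ : (u, v) ∈ Invs σ
      · rw [if_pos hxσ]
        intro heq
        rw [Prod.mk.injEq] at heq
        obtain ⟨rfl, rfl⟩ := heq
        have := (mem_Invs.1 hx).2
        rw [hwv0, hwd] at this
        exact absurd hkj (not_lt.2 this.le)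
      · rw [if_neg hxσ]
        rcases fact1 u v hx hxσ with rfl | rfl
        · rw [if_pos rfl]
          intro heq
          rw [Prod.mk.injEq] at heq
          obtain ⟨rfl, -⟩ := heq
          exact absurd ((fact2 v0 hx hxσ).1.trans hck) (lt_irrefl v0)
        · have hvnc : v ≠ c := (ne_of_lt (hcd.trans (mem_Invs.1 hx).1)).symm
          rw [if_neg hvnc]
          intro heq
          rw [Prod.mk.injEq] at heq
          obtain ⟨hh, -⟩ := heq
          exact absurd (hh ▸ hck) (lt_irrefl c)
    set S : Finset (Fin (n+1) × Fin (n+1)) := {(c, d), (c, v0), (v0, d)} with hS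
    have hScard : S.card = 3 := by
      rw [hS]
      rw [Finset.card_insert_of_notMem, Finset.card_insert_of_notMem,
        Finset.card_singleton]
      · simp only [Finset.mem_singleton, Prod.mk.injEq, not_and]
        intro h
        exact absurd (h ▸ hck) (lt_irrefl _)
      · simp only [Finset.mem_insert, Finset.mem_singleton, Prod.mk.injEq, not_or, not_and]
        constructor
        · intro _
          exact hv0nd.symm
        · intro h
          exact absurd (h ▸ hck) (lt_irrefl _)
    have hSsub : S ⊆ Invs σ := by
      rw [hS]
      intro x hx
      simp only [Finset.mem_insert, Finset.mem_singleton] at hx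
      rcases hx with rfl | rfl | rfl
      · exact hcdσ
      · exact hcv0σ
      · exact hv0dσ
    have h1 : (Invs w).card ≤ ((Invs σ) \ S).card := by
      apply Finset.card_le_card_of_injOn φ
      · intro x hx
        rw [Finset.mem_coe, Finset.mem_sdiff]
        refine ⟨mapsto x hx, ?_⟩
        rw [hS]
        simp only [Finset.mem_insert, Finset.mem_singleton, not_or]
        exact ⟨hcdnimg x hx, hcv0nimg x hx, hv0dnimg x hx⟩
      · exact hinj
    rw [Finset.card_sdiff_of_subset hSsub, hScard] at h1
    have := Finset.card_le_card hSsub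
    omega

lemma swap_ascend {w : Perm (Fin (n+1))} {i j : Fin (n+1)} (hij : i < j)
    (h : len (w * Equiv.swap i j) = len w + 1) : w i < w j := by
  rcases lt_trichotomy (w i) (w j) with h' | h' | h'
  · exact h'
  · exact absurd (w.injective h') (ne_of_lt hij)
  · exfalso
    set w' := w * Equiv.swap i j with hw'
    have hw'i : w' i = w j := by rw [hw', Perm.mul_apply, Equiv.swap_apply_left]
    have hw'j : w' j = w i := by rw [hw', Perm.mul_apply, Equiv.swap_apply_right]
    have hasc : w' i < w' j := by rw [hw'i, hw'j]; exact h'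
    have hcard := (card_swap_ge hij hasc).1
    have hww : w' * Equiv.swap i j = w := by
      rw [hw', mul_assoc, Equiv.swap_mul_self, mul_one]
    rw [hww] at hcard
    rw [len_eq_card, len_eq_card] at h
    omega

lemma swap_no_mid {w : Perm (Fin (n+1))} {i j k : Fin (n+1)} (hij : i < j)
    (h : len (w * Equiv.swap i j) = len w + 1)
    (hik : i < k) (hkj : k < j) (h2 : w i < w k) (h3 : w k < w j) : False := by
  have hw := swap_ascend hij h
  have := (card_swap_ge hij hw).2 k hik hkj h2 h3
  rw [len_eq_card, len_eq_card] at h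
  omega

lemma main_aux {π σ τ β : Perm (Fin (n+1))} (hτπ : Invs τ ⊆ Invs π)
    (hσπ : Invs σ ⊆ Invs π) (hne : σ ≠ τ) {m : Fin n} {i j : Fin (n+1)} (hij : i < j)
    (hβ : β = τ * simpleT m) (hβτ : len τ = len β + 1)
    (hσ : σ = β * Equiv.swap i j) (hβσ : len σ = len β + 1) :
    σ m.castSucc < σ m.succ ∧ (σ m.castSucc, σ m.succ) ∈ Invs π := by
  set p : Fin (n+1) := m.castSucc with hpdef
  set q : Fin (n+1) := m.succ with hqdef
  have hpq : (q : ℕ) = (p : ℕ) + 1 := q_val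
  have hpltq : p < q := by rw [Fin.lt_def]; omega
  have sdef : simpleT m = Equiv.swap p q := rfl
  have hτβ : τ = β * simpleT m := by rw [hβ, mul_assoc, simpleT_mul_self, mul_one]
  -- τ has a descent at m
  have hdesc : τ q < τ p := by
    rcases lt_trichotomy (τ p) (τ q) with h' | h' | h'
    · exfalso
      obtain ⟨he, hnm⟩ := Invs_ascent (w := τ) (m := m) h'
      rw [← hβ] at he
      rw [len_eq_card, len_eq_card, he, Finset.card_insert_of_notMem hnm] at hβτ
      omega
    · exact absurd (τ.injective h') pq_ne
    · exact h'
  set x := τ p with hx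
  set y := τ q with hy
  have hβp : β p = y := by
    rw [hβ, Perm.mul_apply, sdef, Equiv.swap_apply_left]
  have hβq : β q = x := by
    rw [hβ, Perm.mul_apply, sdef, Equiv.swap_apply_right]
  have hβasc : β p < β q := by rw [hβp, hβq]; exact hdesc
  have heτ : Invs τ = insert (y, x) (Invs β) := by
    obtain ⟨he, -⟩ := Invs_ascent hβasc
    rw [← hτβ, hβp, hβq] at he
    exact he
  have hyxτ : (y, x) ∈ Invs τ := by rw [heτ]; exact Finset.mem_insert_self _ _
  have hlenσ : len (β * Equiv.swap i j) = len β + 1 := by rw [← hσ]; exact hβσ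
  have hcd : β i < β j := swap_ascend hij hlenσ
  have hτinv : ∀ z, τ⁻¹ z = Equiv.swap p q (β⁻¹ z) := by
    intro z
    rw [hτβ, sdef, mul_swap_inv_apply]
  have hσinv : ∀ z, σ⁻¹ z = Equiv.swap i j (β⁻¹ z) := by
    intro z
    rw [hσ, mul_swap_inv_apply]
  have hσp : σ p = β (Equiv.swap i j p) := by rw [hσ, Perm.mul_apply]
  have hσq : σ q = β (Equiv.swap i j q) := by rw [hσ, Perm.mul_apply]
  by_cases hip : i = p
  · by_cases hjq : j = q
    · exfalso
      apply hne
      rw [hσ, hip, hjq, ← sdef, ← hτβ]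
    · -- C2 : i = p, q < j
      have hqj : q < j := by
        rw [Fin.lt_def] at hij ⊢
        have : (j : ℕ) ≠ (q : ℕ) := fun hh => hjq (Fin.ext hh)
        omega
      have hdx : β j < x := by
        have hne' : β j ≠ x := by
          rw [← hβq]; exact fun hh => (ne_of_lt hqj) (β.injective hh).symm
        rcases lt_or_gt_of_ne hne' with h' | h'
        · exact h'
        · exfalso
          refine swap_no_mid hij hlenσ (k := q) ?_ hqj ?_ ?_
          · rw [hip]; exact hpltq
          · rw [hip, hβp, hβq]; exact hdesc
          · rw [hβq]; exact h'
      have hσpv : σ p = β j := by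
        rw [hσp, ← hip, Equiv.swap_apply_left]
      have hσqv : σ q = x := by
        have hqi : q ≠ i := by rw [hip]; exact (ne_of_lt hpltq).symm
        rw [hσq, Equiv.swap_apply_of_ne_of_ne hqi (ne_of_lt hqj), hβq]
      refine ⟨by rw [hσpv, hσqv]; exact hdx, ?_⟩
      apply hτπ
      rw [hσpv, hσqv, mem_Invs]
      refine ⟨hdx, ?_⟩
      have h1 : τ⁻¹ (β j) = j := by
        rw [hτinv, Perm.inv_apply_self, Equiv.swap_apply_of_ne_of_ne
          (ne_of_gt (hpltq.trans hqj)) (ne_of_gt hqj)]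
      have h2 : τ⁻¹ x = p := by
        rw [hτinv, ← hβq, Perm.inv_apply_self, Equiv.swap_apply_right]
      rw [h1, h2]
      exact hpltq.trans hqj
  · by_cases hjp : j = p
    · -- C5 : i < j = p
      have hσpv : σ p = β i := by rw [hσp, ← hjp, Equiv.swap_apply_right]
      have hσqv : σ q = x := by
        have hiltq : i < q := by rw [← hjp] at hpltq; exact hij.trans hpltq
        have hqj' : q ≠ j := by rw [hjp]; exact (ne_of_lt hpltq).symm
        rw [hσq, Equiv.swap_apply_of_ne_of_ne (ne_of_gt hiltq) hqj', hβq]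
      have hβjy : β j = y := by rw [hjp, hβp]
      have hcy : β i < y := by rw [← hβjy]; exact hcd
      have hasc : σ p < σ q := by
        rw [hσpv, hσqv]; exact hcy.trans hdesc
      refine ⟨hasc, ?_⟩
      -- (βi, y) ∈ Invs σ and (y, x) ∈ Invs τ; conclude by transitivity in π
      have h1 : (β i, y) ∈ Invs σ := by
        rw [mem_Invs]
        refine ⟨hcy, ?_⟩
        have e1 : σ⁻¹ (β i) = p := by
          rw [hσinv, Perm.inv_apply_self, Equiv.swap_apply_left, hjp]
        have e2 : σ⁻¹ y = i := by
          rw [hσinv, ← hβjy, Perm.inv_apply_self, Equiv.swap_apply_right]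
        rw [e1, e2, ← hjp]
        exact hij
      have hπ1 := (mem_Invs.1 (hσπ h1)).2
      have hπ2 := (mem_Invs.1 (hτπ hyxτ)).2
      rw [hσpv, hσqv, mem_Invs]
      exact ⟨hcy.trans hdesc, hπ2.trans hπ1⟩
    · by_cases hiq : i = q
      · -- C4 : i = q < j
        have hσpv : σ p = y := by
          have hplti : p < i := by rw [hiq]; exact hpltq
          rw [hσp, Equiv.swap_apply_of_ne_of_ne (Ne.symm hip)
            (ne_of_lt (hplti.trans hij)), hβp]
        have hσqv : σ q = β j := by rw [hσq, ← hiq, Equiv.swap_apply_left]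
        have hxd : x < β j := by rw [← hβq, ← hiq]; exact hcd
        have hasc : σ p < σ q := by
          rw [hσpv, hσqv]; exact hdesc.trans hxd
        refine ⟨hasc, ?_⟩
        have h1 : (x, β j) ∈ Invs σ := by
          rw [mem_Invs]
          refine ⟨hxd, ?_⟩
          have e1 : σ⁻¹ x = j := by
            rw [hσinv, ← hβq, Perm.inv_apply_self, ← hiq, Equiv.swap_apply_left]
          have e2 : σ⁻¹ (β j) = i := by
            rw [hσinv, Perm.inv_apply_self, Equiv.swap_apply_right]
          rw [e1, e2]
          exact hij
        have hπ1 := (mem_Invs.1 (hσπ h1)).2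
        have hπ2 := (mem_Invs.1 (hτπ hyxτ)).2
        rw [hσpv, hσqv, mem_Invs]
        exact ⟨hdesc.trans hxd, hπ1.trans hπ2⟩
      · by_cases hjq : j = q
        · -- C3 : i < p, j = q
          have hiltp : i < p := by
            rw [Fin.lt_def] at hij ⊢
            have h1 : (i : ℕ) ≠ (p : ℕ) := fun hh => hip (Fin.ext hh)
            have h2 : (j : ℕ) = (q : ℕ) := by rw [hjq]
            omega
          have hyc : y < β i := by
            have hne' : β i ≠ y := by
              rw [← hβp]; exact fun hh => (ne_of_lt hiltp) (β.injective hh)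
            rcases lt_or_gt_of_ne hne' with h' | h'
            · exfalso
              refine swap_no_mid hij hlenσ (k := p) hiltp ?_ ?_ ?_
              · rw [hjq]; exact hpltq
              · rw [hβp]; exact h'
              · rw [hβp, hjq, hβq]; exact hdesc
            · exact h'
          have hσpv : σ p = y := by
            rw [hσp, Equiv.swap_apply_of_ne_of_ne (Ne.symm hip)
              (by rw [hjq]; exact (ne_of_lt hpltq)), hβp]
          have hσqv : σ q = β i := by rw [hσq, ← hjq, Equiv.swap_apply_right]
          refine ⟨by rw [hσpv, hσqv]; exact hyc, ?_⟩
          apply hτπ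
          rw [hσpv, hσqv, mem_Invs]
          refine ⟨hyc, ?_⟩
          have e1 : τ⁻¹ y = q := by
            rw [hτinv, ← hβp, Perm.inv_apply_self, Equiv.swap_apply_left]
          have e2 : τ⁻¹ (β i) = i := by
            rw [hτinv, Perm.inv_apply_self, Equiv.swap_apply_of_ne_of_ne hip hiq]
          rw [e1, e2]
          exact hiltp.trans hpltq
        · -- C6 : disjoint
          have hσpv : σ p = y := by
            rw [hσp, Equiv.swap_apply_of_ne_of_ne (Ne.symm hip) (Ne.symm hjp), hβp]
          have hσqv : σ q = x := by
            rw [hσq, Equiv.swap_apply_of_ne_of_ne (Ne.symm hiq) (Ne.symm hjq), hβq]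
          refine ⟨by rw [hσpv, hσqv]; exact hdesc, ?_⟩
          rw [hσpv, hσqv]
          exact hτπ hyxτ

/-- If `τ ⋗ β = τ sₘ` (weak order) and `β ⋖ σ = β tᵢⱼ` (strong order) with everything in
`[e, π]` for a 132-avoiding `π`, then `α = σ sₘ` satisfies `τ ⋖ α` in the strong order,
`σ ⋖ α` in the weak order, and `α ∈ [e, π]`. -/
theorem up_down_path_exists {n : ℕ} (π σ τ β : Equiv.Perm (Fin (n+1)))
    (hπ : ¬ contains132 π) (hσπ : weakLE σ π) (hτπ : weakLE τ π) (hβπ : weakLE β π)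
    (hne : σ ≠ τ) (m : Fin n) (i j : Fin (n+1)) (hij : i ≠ j)
    (hβ : β = τ * simpleT m) (hβτ : len τ = len β + 1)
    (hσ : σ = β * Equiv.swap i j) (hβσ : len σ = len β + 1) :
    (∃ a b : Fin (n+1), a ≠ b ∧ σ * simpleT m = τ * Equiv.swap a b) ∧
      len (σ * simpleT m) = len τ + 1 ∧
      len (σ * simpleT m) = len σ + 1 ∧
      weakLE (σ * simpleT m) π := by
  have hτπ' : Invs τ ⊆ Invs π := weakLE_subset hτπ
  have hσπ' : Invs σ ⊆ Invs π := weakLE_subset hσπ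
  have key : σ m.castSucc < σ m.succ ∧ (σ m.castSucc, σ m.succ) ∈ Invs π := by
    rcases lt_or_gt_of_ne hij with h' | h'
    · exact main_aux hτπ' hσπ' hne h' hβ hβτ hσ hβσ
    · rw [Equiv.swap_comm] at hσ
      exact main_aux hτπ' hσπ' hne h' hβ hβτ hσ hβσ
  obtain ⟨hasc, hpair⟩ := key
  obtain ⟨he, hnm⟩ := Invs_ascent hasc
  have hlen1 : len (σ * simpleT m) = len σ + 1 := by
    rw [len_eq_card, len_eq_card, he, Finset.card_insert_of_notMem hnm]
  have hlen2 : len (σ * simpleT m) = len τ + 1 := by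
    rw [hlen1, hβσ, hβτ]
  refine ⟨?_, hlen2, hlen1, ?_⟩
  · refine ⟨simpleT m i, simpleT m j, (simpleT m).injective.ne hij, ?_⟩
    have hswap : Equiv.swap (simpleT m i) (simpleT m j)
        = simpleT m * Equiv.swap i j * (simpleT m)⁻¹ :=
      Equiv.swap_apply_apply (simpleT m) i j
    have hstinv : (simpleT m)⁻¹ = simpleT m := by
      rw [simpleT, Equiv.swap_inv]
    rw [hswap, hstinv, hσ, hβ]
    simp [mul_assoc]
  · apply subset_weakLE
    rw [he]
    exact Finset.insert_subset hpair hσπ'
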